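/- Fix n ≥ 1 and a field 𝕜 with q ∈ 𝕜 invertible. Let i be a positive integer with i ∉ {n-1, n}. Then in the Hecke algebra (of a large enough symmetric group containing both indices), the generator T_i commutes with the Young–Jucys–Murphy element J_n = Σ_{j=1}^{n-1} q^{j-n} T_{(j,n)}. Consequently, J_n commutes with every element of the subalgebra H_{n-1}(q) generated by T_1,...,T_{n-2}. -/

import Mathlib

/-- The Coxeter length of a permutation of `Fin n`, i.e. its number of inversions. -/
def permLength {n : ℕ} (w : Equiv.Perm (Fin n)) : ℕ :=
  (Finset.univ.filter fun p : Fin n × Fin n => p.1 < p.2 ∧ w p.2 < w p.1).card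

/-- A realization of the type-A Iwahori–Hecke algebra `H_n(q)` inside a `𝕜`-algebra `H`:
a family `T_w` (`w ∈ S_n`) with `T_1 = 1`, `T_v T_w = T_{vw}` whenever lengths add
(equivalently, `T_w = T_{i_1} ⋯ T_{i_k}` for any reduced word), and the quadratic
relation `T_s² = (q-1) T_s + q` for simple transpositions `s = (i, i+1)`. -/
structure HeckeFamily (𝕜 : Type*) [CommRing 𝕜] (q : 𝕜) (n : ℕ)
    (H : Type*) [Ring H] [Algebra 𝕜 H] where
  T : Equiv.Perm (Fin n) → H
  T_one : T 1 = 1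
  T_mul : ∀ v w : Equiv.Perm (Fin n),
    permLength (v * w) = permLength v + permLength w → T v * T w = T (v * w)
  T_quad : ∀ i j : Fin n, (i : ℕ) + 1 = (j : ℕ) →
    T (Equiv.swap i j) * T (Equiv.swap i j) =
      (q - 1) • T (Equiv.swap i j) + algebraMap 𝕜 H q


lemma permLength_one {n : ℕ} : permLength (1 : Equiv.Perm (Fin n)) = 0 := by
  simp only [permLength, Finset.card_eq_zero]
  apply Finset.ext; intro p
  simp only [Finset.mem_filter]
  simp only [Finset.mem_filter, Finset.mem_univ, true_and, Finset.notMem_empty, iff_false,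
    Equiv.Perm.one_apply]
  rintro ⟨h1, h2⟩
  exact absurd (h1.trans h2) (lt_irrefl _)

lemma swap_adj_lt {n : ℕ} {k k' : Fin n} (h : (k : ℕ) + 1 = (k' : ℕ)) {a b : Fin n}
    (hab : a < b) (hne : ¬(a = k ∧ b = k')) : Equiv.swap k k' a < Equiv.swap k k' b := by
  rw [Equiv.swap_apply_def, Equiv.swap_apply_def]
  split_ifs with h1 h2 h3 h4 <;>
    simp only [Fin.lt_def, Fin.ext_iff, not_and] at hab hne h ⊢ <;>
    omega

lemma permLength_mul_swap {n : ℕ} (w : Equiv.Perm (Fin n)) (k k' : Fin n)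
    (h : (k : ℕ) + 1 = (k' : ℕ)) (hw : w k < w k') :
    permLength (w * Equiv.swap k k') = permLength w + 1 := by
  classical
  set s := Equiv.swap k k' with hs
  have hkk' : k < k' := by rw [Fin.lt_def]; omega
  have hset : (Finset.univ.filter fun p : Fin n × Fin n =>
        p.1 < p.2 ∧ (w * s) p.2 < (w * s) p.1) =
      insert (k, k') ((Finset.univ.filter fun p : Fin n × Fin n =>
        p.1 < p.2 ∧ w p.2 < w p.1).image fun p => (s p.1, s p.2)) := by
    apply Finset.ext; intro p
    simp only [Finset.mem_filter]
    simp only [Finset.mem_filter, Finset.mem_univ, true_and, Finset.mem_insert,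
      Finset.mem_image, Equiv.Perm.mul_apply]
    constructor
    · rintro ⟨h1, h2⟩
      by_cases hpk : p = (k, k')
      · exact Or.inl hpk
      · refine Or.inr ⟨(s p.1, s p.2), ⟨?_, ?_⟩, ?_⟩
        · refine swap_adj_lt h h1 ?_
          intro ⟨ha, hb⟩; exact hpk (Prod.ext ha hb)
        · simpa using h2
        · simp [hs, Prod.ext_iff]
    · rintro (rfl | ⟨q, ⟨hq1, hq2⟩, rfl⟩)
      · refine ⟨hkk', ?_⟩
        simp only [hs, Equiv.swap_apply_left, Equiv.swap_apply_right]
        exact hw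
      · refine ⟨?_, ?_⟩
        · refine swap_adj_lt h hq1 ?_
          rintro ⟨rfl, rfl⟩
          exact absurd (hq2.trans hw) (lt_irrefl _)
        · simpa [hs] using hq2
  rw [permLength, hset, Finset.card_insert_of_notMem, Finset.card_image_of_injective,
    permLength]
  · exact fun p q hpq => by
      simpa [Prod.ext_iff, (Equiv.injective s).eq_iff] using hpq
  · simp only [Finset.mem_image, Finset.mem_filter, Finset.mem_univ, true_and, not_exists]
    rintro q ⟨⟨hq1, _⟩, hq⟩
    rw [Prod.ext_iff] at hq
    have h1 : q.1 = k' := by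
      have := congrArg s hq.1; simpa [hs] using this
    have h2 : q.2 = k := by
      have := congrArg s hq.2; simpa [hs] using this
    rw [h1, h2] at hq1
    exact absurd (hq1.trans hkk') (lt_irrefl _)

lemma permLength_inv {n : ℕ} (w : Equiv.Perm (Fin n)) : permLength w⁻¹ = permLength w := by
  classical
  unfold permLength
  apply Finset.card_bij' (fun p _ => ((w⁻¹ p.2 : Fin n), (w⁻¹ p.1 : Fin n)))
    (fun p _ => ((w p.2 : Fin n), (w p.1 : Fin n)))
  · intro p hp
    simp only [Finset.mem_filter, Finset.mem_univ, true_and] at hp ⊢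
    exact ⟨hp.2, by simpa using hp.1⟩
  · intro p hp
    simp only [Finset.mem_filter, Finset.mem_univ, true_and] at hp ⊢
    exact ⟨hp.2, by simpa using hp.1⟩
  · intro p _; simp
  · intro p _; simp

lemma permLength_swap_adj {n : ℕ} {k k' : Fin n} (h : (k : ℕ) + 1 = (k' : ℕ)) :
    permLength (Equiv.swap k k') = 1 := by
  have hlt : (1 : Equiv.Perm (Fin n)) k < (1 : Equiv.Perm (Fin n)) k' := by
    simp only [Equiv.Perm.one_apply, Fin.lt_def]; omega
  have := permLength_mul_swap (1 : Equiv.Perm (Fin n)) k k' h hlt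
  simpa [permLength_one] using this

lemma permLength_swap_mul {n : ℕ} (w : Equiv.Perm (Fin n)) (k k' : Fin n)
    (h : (k : ℕ) + 1 = (k' : ℕ)) (hw : w⁻¹ k < w⁻¹ k') :
    permLength (Equiv.swap k k' * w) = permLength w + 1 := by
  have h1 : permLength (w⁻¹ * Equiv.swap k k') = permLength w⁻¹ + 1 :=
    permLength_mul_swap w⁻¹ k k' h hw
  have h2 : (Equiv.swap k k' * w)⁻¹ = w⁻¹ * Equiv.swap k k' := by
    rw [mul_inv_rev, Equiv.swap_inv]
  rw [← permLength_inv (Equiv.swap k k' * w), h2, h1, permLength_inv]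

lemma swap_mul_of_fixed {α : Type*} [DecidableEq α] (w : Equiv.Perm α) (k k' : α)
    (h1 : w k = k) (h2 : w k' = k') : Equiv.swap k k' * w = w * Equiv.swap k k' := by
  ext x
  simp only [Equiv.Perm.mul_apply]
  rcases eq_or_ne x k with rfl | hxk
  · rw [h1, Equiv.swap_apply_left, h2]
  rcases eq_or_ne x k' with rfl | hxk'
  · rw [h2, Equiv.swap_apply_right, h1]
  · rw [Equiv.swap_apply_of_ne_of_ne hxk hxk',
      Equiv.swap_apply_of_ne_of_ne (fun hc => hxk (by rw [← h1] at hc; exact w.injective hc))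
        (fun hc => hxk' (by rw [← h2] at hc; exact w.injective hc))]

section Hecke

variable {𝕜 : Type*} [Field 𝕜] {q : 𝕜} {m : ℕ} {H : Type*} [Ring H] [Algebra 𝕜 H]

/-- `T_s` commutes with `T_w` when `w` fixes both points of an adjacent swap `s`. -/
lemma hecke_comm_fixed (hF : HeckeFamily 𝕜 q m H) (k k' : Fin m)
    (h : (k : ℕ) + 1 = (k' : ℕ)) (w : Equiv.Perm (Fin m))
    (h1 : w k = k) (h2 : w k' = k') :
    Commute (hF.T (Equiv.swap k k')) (hF.T w) := by
  have hkk' : k < k' := by rw [Fin.lt_def]; omega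
  have e1 : hF.T (Equiv.swap k k') * hF.T w = hF.T (Equiv.swap k k' * w) := by
    apply hF.T_mul
    rw [permLength_swap_mul w k k' h, permLength_swap_adj h, add_comm]
    rw [show w⁻¹ k = k from w.injective (by rw [← Equiv.Perm.mul_apply, mul_inv_cancel, Equiv.Perm.one_apply, h1]),
      show w⁻¹ k' = k' from w.injective (by rw [← Equiv.Perm.mul_apply, mul_inv_cancel, Equiv.Perm.one_apply, h2])]
    exact hkk'
  have e2 : hF.T w * hF.T (Equiv.swap k k') = hF.T (w * Equiv.swap k k') := by
    apply hF.T_mul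
    rw [permLength_mul_swap w k k' h (by rw [h1, h2]; exact hkk'), permLength_swap_adj h]
  rw [Commute, SemiconjBy, e1, e2, swap_mul_of_fixed w k k' h1 h2]

/-- `T_s` commutes with `T_s x T_s + q • x`. -/
lemma hecke_comm_quad (hF : HeckeFamily 𝕜 q m H) (k k' : Fin m)
    (h : (k : ℕ) + 1 = (k' : ℕ)) (x : H) :
    Commute (hF.T (Equiv.swap k k'))
      (hF.T (Equiv.swap k k') * x * hF.T (Equiv.swap k k') + q • x) := by
  set a := hF.T (Equiv.swap k k') with ha
  have hsq : a * a = (q - 1) • a + algebraMap 𝕜 H q := hF.T_quad k k' h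
  have hcl : ∀ z : H, algebraMap 𝕜 H q * z = q • z := fun z => (Algebra.smul_def q z).symm
  have hcr : ∀ z : H, z * algebraMap 𝕜 H q = q • z := fun z => by
    rw [← Algebra.commutes q z]; exact (Algebra.smul_def q z).symm
  rw [Commute, SemiconjBy]
  have L : a * (a * x * a + q • x)
      = (q - 1) • (a * x * a) + q • (a * x) + q • (x * a) := by
    rw [mul_add, mul_smul_comm, ← mul_assoc, ← mul_assoc, hsq, add_mul, add_mul, hcl]
    simp only [smul_mul_assoc, mul_assoc]
    abel
  have R : (a * x * a + q • x) * a
      = (q - 1) • (a * x * a) + q • (a * x) + q • (x * a) := by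
    rw [add_mul, smul_mul_assoc, mul_assoc (a * x) a a, hsq, mul_add, mul_smul_comm, hcr]
    all_goals simp only [smul_mul_assoc, mul_assoc]
    all_goals abel
  rw [L, R]
end Hecke

def Jterm (𝕜 : Type*) [Field 𝕜] (q : 𝕜) (m : ℕ) (H : Type*) [Ring H] [Algebra 𝕜 H]
    (hF : HeckeFamily 𝕜 q m H) (n : ℕ) (hnm : n < m) : ℕ → H :=
  fun j => if h : j < n - 1 then
    (q⁻¹ ^ (n - 1 - j)) • hF.T (Equiv.swap ⟨j, by omega⟩ ⟨n - 1, by omega⟩) else 0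

theorem key (𝕜 : Type*) [Field 𝕜] (q : 𝕜) (hq : q ≠ 0) (n m : ℕ) (hnm : n < m)
    (H : Type*) [Ring H] [Algebra 𝕜 H] (hF : HeckeFamily 𝕜 q m H)
    (i : ℕ) (hi : 0 < i) (hi1 : i ≠ n - 1) (hi2 : i ≠ n) (him : i < m) :
    Commute (hF.T (Equiv.swap ⟨i - 1, by omega⟩ ⟨i, him⟩))
      (∑ j ∈ Finset.range (n - 1), Jterm 𝕜 q m H hF n hnm j) := by
  set k : Fin m := ⟨i - 1, by omega⟩ with hk
  set k' : Fin m := ⟨i, him⟩ with hk'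
  have hadj : (k : ℕ) + 1 = (k' : ℕ) := show i - 1 + 1 = i by omega
  have hdist : ∀ j : ℕ, j < n - 1 → j ≠ i - 1 → j ≠ i → n - 1 ≠ i - 1 → n - 1 ≠ i →
      Commute (hF.T (Equiv.swap k k')) (Jterm 𝕜 q m H hF n hnm j) := by
    intro j hj hj1 hj2 hn1 hn2
    rw [Jterm, dif_pos hj]
    apply Commute.smul_right
    apply hecke_comm_fixed hF k k' hadj
    · exact Equiv.swap_apply_of_ne_of_ne (Fin.ne_of_val_ne (show i - 1 ≠ j by omega))
        (Fin.ne_of_val_ne (show i - 1 ≠ n - 1 by omega))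
    · exact Equiv.swap_apply_of_ne_of_ne (Fin.ne_of_val_ne (show i ≠ j by omega))
        (Fin.ne_of_val_ne (show i ≠ n - 1 by omega))
  rcases lt_or_gt_of_ne hi1 with hcase | hcase
  · -- i < n - 1
    have hsub : ({i - 1, i} : Finset ℕ) ⊆ Finset.range (n - 1) := by
      intro x hx
      simp only [Finset.mem_insert, Finset.mem_singleton] at hx
      rcases hx with rfl | rfl <;> rw [Finset.mem_range] <;> omega
    rw [← Finset.sum_sdiff hsub]
    apply Commute.add_right
    · apply Commute.sum_right
      intro j hj
      simp only [Finset.mem_sdiff, Finset.mem_range, Finset.mem_insert,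
        Finset.mem_singleton, not_or] at hj
      exact hdist j hj.1 hj.2.1 hj.2.2 (by omega) (by omega)
    · rw [Finset.sum_pair (by omega : i - 1 ≠ i)]
      rw [Jterm, Jterm, dif_pos (show i - 1 < n - 1 by omega), dif_pos (show i < n - 1 by omega)]
      set b : Fin m := ⟨n - 1, by omega⟩ with hb
      set ta : Equiv.Perm (Fin m) := Equiv.swap k' b with hta
      have hne1 : k ≠ k' := Fin.ne_of_val_ne (show i - 1 ≠ i by omega)
      have hne2 : k ≠ b := Fin.ne_of_val_ne (show i - 1 ≠ n - 1 by omega)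
      have hne3 : k' ≠ b := Fin.ne_of_val_ne (show i ≠ n - 1 by omega)
      have hltkb : k < b := by rw [Fin.lt_def]; exact show i - 1 < n - 1 by omega
      have hltk'b : k' < b := by rw [Fin.lt_def]; exact show i < n - 1 by omega
      have htak : ta k = k := Equiv.swap_apply_of_ne_of_ne hne1 hne2
      have htak' : ta k' = b := Equiv.swap_apply_left k' b
      have e1 : hF.T (Equiv.swap k k') * hF.T ta = hF.T (Equiv.swap k k' * ta) := by
        apply hF.T_mul
        have c1 : ta⁻¹ k = k := by rw [hta, Equiv.swap_inv, ← hta]; exact htak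
        have c2 : ta⁻¹ k' = b := by rw [hta, Equiv.swap_inv, ← hta]; exact htak'
        rw [permLength_swap_mul ta k k' hadj (by rw [c1, c2]; exact hltkb),
          permLength_swap_adj hadj, add_comm]
      have e2 : hF.T (Equiv.swap k k' * ta) * hF.T (Equiv.swap k k') =
          hF.T (Equiv.swap k k' * ta * Equiv.swap k k') := by
        apply hF.T_mul
        have c1 : (Equiv.swap k k' * ta) k = k' := by
          rw [Equiv.Perm.mul_apply, htak, Equiv.swap_apply_left]
        have c2 : (Equiv.swap k k' * ta) k' = b := by
          rw [Equiv.Perm.mul_apply, htak',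
            Equiv.swap_apply_of_ne_of_ne hne2.symm hne3.symm]
        rw [permLength_mul_swap _ k k' hadj (by rw [c1, c2]; exact hltk'b),
          permLength_swap_adj hadj]
      have e3 : Equiv.swap k k' * ta * Equiv.swap k k' = Equiv.swap k b := by
        nth_rewrite 2 [← Equiv.swap_inv k k']
        rw [hta, ← Equiv.swap_apply_apply (Equiv.swap k k') k' b,
          Equiv.swap_apply_right,
          Equiv.swap_apply_of_ne_of_ne hne2.symm hne3.symm]
      have hT : hF.T (Equiv.swap k b) =
          hF.T (Equiv.swap k k') * hF.T ta * hF.T (Equiv.swap k k') := by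
        rw [e1, e2, e3]
      show Commute (hF.T (Equiv.swap k k'))
        (q⁻¹ ^ (n - 1 - (i - 1)) • hF.T (Equiv.swap k b) +
          q⁻¹ ^ (n - 1 - i) • hF.T ta)
      have hcoef : q⁻¹ ^ (n - 1 - (i - 1)) • hF.T (Equiv.swap k b) +
          q⁻¹ ^ (n - 1 - i) • hF.T ta =
          q⁻¹ ^ (n - i) • (hF.T (Equiv.swap k k') * hF.T ta * hF.T (Equiv.swap k k')
            + q • hF.T ta) := by
        rw [smul_add, smul_smul, ← hT, show (n : ℕ) - 1 - (i - 1) = n - i by omega]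
        congr 1
        have h2 : q⁻¹ ^ (n - i) * q = q⁻¹ ^ (n - 1 - i) := by
          rw [show (n : ℕ) - i = (n - 1 - i) + 1 by omega, pow_succ, mul_assoc,
            inv_mul_cancel₀ hq, mul_one]
        rw [h2]
      rw [hcoef]
      exact Commute.smul_right (hecke_comm_quad hF k k' hadj (hF.T ta)) _
  · -- i > n - 1, so i ≥ n + 1 since i ≠ n
    apply Commute.sum_right
    intro j hj
    rw [Finset.mem_range] at hj
    exact hdist j hj (by omega) (by omega) (by omega) (by omega)


/-- Let `n ≥ 1`, `q` invertible, and `i` a positive integer with `i ∉ {n-1, n}`. Then in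
the Hecke algebra `H_m(q)` with `m > max(i, n)`, the generator `T_i` commutes with the
Young–Jucys–Murphy element `J_n = Σ_{j=1}^{n-1} q^{j-n} T_{(j,n)}`; consequently `J_n`
commutes with every element of the subalgebra generated by `T_1, ..., T_{n-2}`. -/
theorem stmt17 (𝕜 : Type*) [Field 𝕜] (q : 𝕜) (hq : q ≠ 0) (n i m : ℕ)
    (hn : 1 ≤ n) (hi : 0 < i) (hi1 : i ≠ n - 1) (hi2 : i ≠ n)
    (him : i < m) (hnm : n < m)
    (H : Type*) [Ring H] [Algebra 𝕜 H] (hF : HeckeFamily 𝕜 q m H) :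
    (hF.T (Equiv.swap ⟨i - 1, by omega⟩ ⟨i, by omega⟩) *
        (∑ j ∈ (Finset.range (n - 1)).attach,
          (q⁻¹ ^ (n - 1 - (j : ℕ))) •
            hF.T (Equiv.swap
              ⟨(j : ℕ), by have := Finset.mem_range.mp j.2; omega⟩ ⟨n - 1, by omega⟩)) =
      (∑ j ∈ (Finset.range (n - 1)).attach,
          (q⁻¹ ^ (n - 1 - (j : ℕ))) •
            hF.T (Equiv.swap
              ⟨(j : ℕ), by have := Finset.mem_range.mp j.2; omega⟩ ⟨n - 1, by omega⟩)) *
        hF.T (Equiv.swap ⟨i - 1, by omega⟩ ⟨i, by omega⟩)) ∧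
    (∀ x ∈ Algebra.adjoin 𝕜
        {y : H | ∃ j : ℕ, ∃ hj : 1 ≤ j ∧ j ≤ n - 2,
          y = hF.T (Equiv.swap (⟨j - 1, by omega⟩ : Fin m) ⟨j, by omega⟩)},
      x * (∑ j ∈ (Finset.range (n - 1)).attach,
          (q⁻¹ ^ (n - 1 - (j : ℕ))) •
            hF.T (Equiv.swap
              ⟨(j : ℕ), by have := Finset.mem_range.mp j.2; omega⟩ ⟨n - 1, by omega⟩)) =
        (∑ j ∈ (Finset.range (n - 1)).attach,
          (q⁻¹ ^ (n - 1 - (j : ℕ))) •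
            hF.T (Equiv.swap
              ⟨(j : ℕ), by have := Finset.mem_range.mp j.2; omega⟩ ⟨n - 1, by omega⟩)) * x) := by
  have hJ : (∑ j ∈ (Finset.range (n - 1)).attach,
        (q⁻¹ ^ (n - 1 - (j : ℕ))) •
          hF.T (Equiv.swap
            ⟨(j : ℕ), by have := Finset.mem_range.mp j.2; omega⟩ ⟨n - 1, by omega⟩)) =
      ∑ j ∈ Finset.range (n - 1), Jterm 𝕜 q m H hF n hnm j := by
    rw [← Finset.sum_attach (Finset.range (n - 1)) (Jterm 𝕜 q m H hF n hnm)]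
    refine Finset.sum_congr rfl fun j _ => ?_
    rw [Jterm, dif_pos (Finset.mem_range.mp j.2)]
  rw [hJ]
  constructor
  · exact key 𝕜 q hq n m hnm H hF i hi hi1 hi2 him
  · intro x hx
    have hcent : Algebra.adjoin 𝕜
        {y : H | ∃ j : ℕ, ∃ hj : 1 ≤ j ∧ j ≤ n - 2,
          y = hF.T (Equiv.swap (⟨j - 1, by omega⟩ : Fin m) ⟨j, by omega⟩)} ≤
        Subalgebra.centralizer 𝕜 {∑ j ∈ Finset.range (n - 1), Jterm 𝕜 q m H hF n hnm j} := by
      apply Algebra.adjoin_le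
      rintro y ⟨j, ⟨hj1, hj2⟩, rfl⟩
      rw [SetLike.mem_coe, Subalgebra.mem_centralizer_iff]
      rintro g rfl
      exact (key 𝕜 q hq n m hnm H hF j hj1 (by omega) (by omega) (by omega)).symm
    have := hcent hx
    rw [Subalgebra.mem_centralizer_iff] at this
    exact (this _ rfl).symm
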